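/- Let A be a D×D real matrix with all entries strictly positive and let Δ(A) := sup{d_H(A·u, A·v) : u, v ∈ ℝ^D with all entries strictly positive}. Then the normalized map F(x) := (A·x)/‖A·x‖ maps the set E = {x ∈ ℝ^D : all entries of x strictly positive, ‖x‖ = 1} into itself and is a strict contraction with respect to the Hilbert metric: for all x, y ∈ E, d_H(F(x), F(y)) ≤ tanh(Δ(A)/4)·d_H(x, y), where tanh(Δ(A)/4) < 1. -/

import Mathlib

set_option linter.unusedSectionVars false

/-- The Hilbert projective metric on the interior of the positive orthant of `ℝ^D`:
`d_H(x,y) = log ((max_i x_i/y_i) / (min_i x_i/y_i))`. -/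
noncomputable def dH {D : ℕ} (x y : Fin D → ℝ) : ℝ :=
  Real.log ((⨆ i, x i / y i) / ⨅ i, x i / y i)

/-- The Euclidean norm on `ℝ^D`. -/
noncomputable def euclNormFin {D : ℕ} (x : Fin D → ℝ) : ℝ :=
  Real.sqrt (∑ i, x i ^ 2)

/-- The projective diameter `Δ(A) = sup {d_H(Au, Av) : u, v ≻ 0}`. -/
noncomputable def projDiam {D : ℕ} (A : Matrix (Fin D) (Fin D) ℝ) : ℝ :=
  sSup {d : ℝ | ∃ u v : Fin D → ℝ, (∀ i, 0 < u i) ∧ (∀ i, 0 < v i) ∧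
    d = dH (A.mulVec u) (A.mulVec v)}

/-- The normalized map `F(x) = A x / ‖A x‖`. -/
noncomputable def Fmap {D : ℕ} (A : Matrix (Fin D) (Fin D) ℝ) (x : Fin D → ℝ) :
    Fin D → ℝ :=
  (euclNormFin (A.mulVec x))⁻¹ • A.mulVec x

open Real Finset

section Helpers

variable {D : ℕ} [Nonempty (Fin D)]

lemma fin_sup_spec (f : Fin D → ℝ) : ∃ i, (⨆ j, f j) = f i ∧ ∀ j, f j ≤ f i := by
  obtain ⟨i, hi⟩ := Finite.exists_max f
  exact ⟨i, le_antisymm (ciSup_le hi) (le_ciSup (Set.finite_range f).bddAbove i), hi⟩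

lemma fin_inf_spec (f : Fin D → ℝ) : ∃ i, (⨅ j, f j) = f i ∧ ∀ j, f i ≤ f j := by
  obtain ⟨i, hi⟩ := Finite.exists_min f
  exact ⟨i, le_antisymm (ciInf_le (Set.finite_range f).bddBelow i) (le_ciInf hi), hi⟩

lemma sup_le_of_forall {f : Fin D → ℝ} {a : ℝ} (h : ∀ i, f i ≤ a) : (⨆ j, f j) ≤ a :=
  ciSup_le h

lemma le_sup_of (f : Fin D → ℝ) (i : Fin D) : f i ≤ ⨆ j, f j :=
  le_ciSup (Set.finite_range f).bddAbove i

lemma inf_le_of (f : Fin D → ℝ) (i : Fin D) : (⨅ j, f j) ≤ f i :=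
  ciInf_le (Set.finite_range f).bddBelow i

lemma le_inf_of_forall {f : Fin D → ℝ} {a : ℝ} (h : ∀ i, a ≤ f i) : a ≤ ⨅ j, f j :=
  le_ciInf h

lemma inf_ratio_pos {u v : Fin D → ℝ} (hu : ∀ i, 0 < u i) (hv : ∀ i, 0 < v i) :
    0 < ⨅ i, u i / v i := by
  obtain ⟨i, hieq, -⟩ := fin_inf_spec (fun i => u i / v i)
  rw [hieq]; exact div_pos (hu i) (hv i)

lemma inf_le_sup_ratio (f : Fin D → ℝ) : (⨅ i, f i) ≤ ⨆ i, f i := by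
  obtain i := Classical.arbitrary (Fin D)
  exact le_trans (inf_le_of f i) (le_sup_of f i)

lemma dH_nonneg {u v : Fin D → ℝ} (hu : ∀ i, 0 < u i) (hv : ∀ i, 0 < v i) :
    0 ≤ dH u v := by
  unfold dH
  have h1 := inf_ratio_pos hu hv
  have h2 := inf_le_sup_ratio (fun i => u i / v i)
  apply Real.log_nonneg
  rw [le_div_iff₀ h1]; simpa using h2

lemma dH_le_of_bounds {u v : Fin D → ℝ} {lo hi : ℝ} (hlo : 0 < lo)
    (h1 : ∀ i, lo ≤ u i / v i) (h2 : ∀ i, u i / v i ≤ hi) :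
    dH u v ≤ Real.log (hi / lo) := by
  unfold dH
  have hS : (⨆ i, u i / v i) ≤ hi := sup_le_of_forall h2
  have hI : lo ≤ ⨅ i, u i / v i := le_inf_of_forall h1
  have hIpos : 0 < ⨅ i, u i / v i := lt_of_lt_of_le hlo hI
  have hhi : 0 ≤ hi := le_trans (hIpos.le.trans ((inf_le_sup_ratio _).trans hS)) le_rfl
  have hSpos : 0 < ⨆ i, u i / v i := hIpos.trans_le (inf_le_sup_ratio _)
  exact Real.log_le_log (div_pos hSpos hIpos) (div_le_div₀ hhi hS hlo hI)

lemma dH_self_eq_zero {u : Fin D → ℝ} (hu : ∀ i, 0 < u i) : dH u u = 0 := by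
  unfold dH
  have h : ∀ i, u i / u i = 1 := fun i => div_self (hu i).ne'
  simp only [h, ciSup_const, ciInf_const, div_one, Real.log_one]

/-- From `dH u v ≤ d` get pairwise cross inequalities. -/
lemma ratio_le_of_dH_le {u v : Fin D → ℝ} {d : ℝ} (hu : ∀ i, 0 < u i)
    (hv : ∀ i, 0 < v i) (h : dH u v ≤ d) (i j : Fin D) :
    u i * v j ≤ Real.exp d * (v i * u j) := by
  have hI := inf_ratio_pos hu hv
  have hS : 0 < ⨆ k, u k / v k := lt_of_lt_of_le hI (inf_le_sup_ratio _)
  have hSI : (⨆ k, u k / v k) / (⨅ k, u k / v k) ≤ Real.exp d := by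
    have := (Real.log_le_iff_le_exp (by positivity)).mp h
    simpa [dH] using this
  have hsi : (⨆ k, u k / v k) ≤ Real.exp d * ⨅ k, u k / v k := by
    rw [div_le_iff₀ hI] at hSI; linarith
  have h1 : u i / v i ≤ ⨆ k, u k / v k := le_sup_of (fun k => u k / v k) i
  have h2 : (⨅ k, u k / v k) ≤ u j / v j := inf_le_of (fun k => u k / v k) j
  have h3 : u i / v i ≤ Real.exp d * (u j / v j) := by
    calc u i / v i ≤ Real.exp d * ⨅ k, u k / v k := le_trans h1 hsi
    _ ≤ Real.exp d * (u j / v j) := by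
        exact mul_le_mul_of_nonneg_left h2 (Real.exp_pos d).le
  rw [div_le_iff₀ (hv i)] at h3
  have h4 := mul_le_mul_of_nonneg_right h3 (hv j).le
  have hvj := (hv j).ne'
  calc u i * v j ≤ Real.exp d * (u j / v j) * v i * v j := h4
  _ = Real.exp d * (v i * u j) := by field_simp

lemma mulVec_pos {A : Matrix (Fin D) (Fin D) ℝ} (hA : ∀ i j, 0 < A i j)
    {z : Fin D → ℝ} (hz : ∀ i, 0 ≤ z i) (hz' : ∃ k, 0 < z k) (i : Fin D) :
    0 < A.mulVec z i := by
  obtain ⟨k, hk⟩ := hz'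
  unfold Matrix.mulVec dotProduct
  apply Finset.sum_pos' (fun j _ => mul_nonneg (hA i j).le (hz j))
  exact ⟨k, Finset.mem_univ k, mul_pos (hA i k) hk⟩

end Helpers
section Diam

variable {D : ℕ} [Nonempty (Fin D)] {A : Matrix (Fin D) (Fin D) ℝ}

def diamSet (A : Matrix (Fin D) (Fin D) ℝ) : Set ℝ :=
  {d : ℝ | ∃ u v : Fin D → ℝ, (∀ i, 0 < u i) ∧ (∀ i, 0 < v i) ∧
    d = dH (A.mulVec u) (A.mulVec v)}

lemma diamSet_bddAbove (hA : ∀ i j, 0 < A i j) : BddAbove (diamSet A) := by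
  obtain ⟨P, hP⟩ := Finite.exists_max (fun p : Fin D × Fin D => A p.1 p.2)
  obtain ⟨Q, hQ⟩ := Finite.exists_min (fun p : Fin D × Fin D => A p.1 p.2)
  set Mx := A P.1 P.2 with hMx
  set Mn := A Q.1 Q.2 with hMn
  have hMnpos : 0 < Mn := hA Q.1 Q.2
  have hMxpos : 0 < Mx := hA P.1 P.2
  refine ⟨Real.log ((Mx / Mn) ^ 2), ?_⟩
  rintro d ⟨u, v, hu, hv, rfl⟩
  have hsum : ∀ w : Fin D → ℝ, (∀ i, 0 < w i) → 0 < ∑ k, w k := by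
    intro w hw
    exact Finset.sum_pos (fun k _ => hw k) Finset.univ_nonempty
  have hbound : ∀ (w : Fin D → ℝ), (∀ i, 0 < w i) → ∀ i,
      Mn * ∑ k, w k ≤ A.mulVec w i ∧ A.mulVec w i ≤ Mx * ∑ k, w k := by
    intro w hw i
    simp only [Matrix.mulVec, dotProduct]
    constructor
    · rw [Finset.mul_sum]
      exact Finset.sum_le_sum fun k _ =>
        mul_le_mul_of_nonneg_right (hQ (i, k)) (hw k).le
    · rw [Finset.mul_sum]
      exact Finset.sum_le_sum fun k _ =>
        mul_le_mul_of_nonneg_right (hP (i, k)) (hw k).le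
  have hu' := hsum u hu
  have hv' := hsum v hv
  have key := dH_le_of_bounds (u := A.mulVec u) (v := A.mulVec v)
    (lo := (Mn * ∑ k, u k) / (Mx * ∑ k, v k)) (hi := (Mx * ∑ k, u k) / (Mn * ∑ k, v k))
    (by positivity)
    (fun i => by
      have h1 := (hbound u hu i).1
      have h2 := (hbound v hv i).2
      have hupos : 0 < A.mulVec u i := lt_of_lt_of_le (by positivity) (hbound u hu i).1
      have hvpos : 0 < A.mulVec v i := lt_of_lt_of_le (by positivity) (hbound v hv i).1
      exact div_le_div₀ hupos.le h1 hvpos h2)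
    (fun i => by
      have h1 := (hbound u hu i).2
      have h2 := (hbound v hv i).1
      have hvpos : 0 < A.mulVec v i := lt_of_lt_of_le (by positivity) (hbound v hv i).1
      exact div_le_div₀ (by positivity) h1 (by positivity) h2)
  have heq : (Mx * ∑ k, u k) / (Mn * ∑ k, v k) / ((Mn * ∑ k, u k) / (Mx * ∑ k, v k))
      = (Mx / Mn) ^ 2 := by
    field_simp
  rwa [heq] at key

lemma zero_mem_diamSet (hA : ∀ i j, 0 < A i j) : (0:ℝ) ∈ diamSet A := by
  refine ⟨(fun _ => 1), (fun _ => 1), fun i => one_pos, fun i => one_pos, ?_⟩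
  have hpos : ∀ i, 0 < A.mulVec (fun _ => (1:ℝ)) i :=
    mulVec_pos hA (fun i => zero_le_one) ⟨Classical.arbitrary (Fin D), one_pos⟩
  exact (dH_self_eq_zero hpos).symm

lemma projDiam_nonneg (hA : ∀ i j, 0 < A i j) : 0 ≤ projDiam A :=
  le_csSup (diamSet_bddAbove hA) (zero_mem_diamSet hA)

lemma dH_le_projDiam (hA : ∀ i j, 0 < A i j) {u v : Fin D → ℝ}
    (hu : ∀ i, 0 < u i) (hv : ∀ i, 0 < v i) :
    dH (A.mulVec u) (A.mulVec v) ≤ projDiam A :=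
  le_csSup (diamSet_bddAbove hA) ⟨u, v, hu, hv, rfl⟩

end Diam

section Cross

variable {D : ℕ} [Nonempty (Fin D)] {A : Matrix (Fin D) (Fin D) ℝ}

lemma mulVec_basis_eps (A : Matrix (Fin D) (Fin D) ℝ) (k : Fin D) (ε : ℝ) (i : Fin D) :
    A.mulVec (fun r => (if r = k then (1:ℝ) else 0) + ε) i
      = A i k + ε * ∑ r, A i r := by
  simp only [Matrix.mulVec, dotProduct, mul_add, Finset.sum_add_distrib, mul_ite,
    mul_one, mul_zero, Finset.sum_ite_eq', Finset.mem_univ, if_true, Finset.mul_sum]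
  ring_nf
  rw [Finset.sum_congr rfl (fun r _ => mul_comm (A i r) ε), ← Finset.mul_sum]

lemma cross_entry (hA : ∀ i j, 0 < A i j) (i j k l : Fin D) :
    A i k * A j l ≤ Real.exp (projDiam A) * (A i l * A j k) := by
  set E := Real.exp (projDiam A) with hE
  set Ri := ∑ r, A i r with hRi
  set Rj := ∑ r, A j r with hRj
  set g : ℝ → ℝ := fun ε =>
    (A i k + ε * Ri) * (A j l + ε * Rj) - E * ((A i l + ε * Ri) * (A j k + ε * Rj)) with hg
  have hgle : ∀ ε ∈ Set.Ioi (0:ℝ), g ε ≤ 0 := by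
    intro ε hε
    rw [Set.mem_Ioi] at hε
    set u : Fin D → ℝ := fun r => (if r = k then (1:ℝ) else 0) + ε with hu
    set v : Fin D → ℝ := fun r => (if r = l then (1:ℝ) else 0) + ε with hv
    have hupos : ∀ r, 0 < u r := fun r => by
      simp only [hu]; split <;> linarith
    have hvpos : ∀ r, 0 < v r := fun r => by
      simp only [hv]; split <;> linarith
    have hAu : ∀ i', 0 < A.mulVec u i' := fun i' =>
      mulVec_pos hA (fun r => (hupos r).le) ⟨k, hupos k⟩ i'
    have hAv : ∀ i', 0 < A.mulVec v i' := fun i' =>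
      mulVec_pos hA (fun r => (hvpos r).le) ⟨l, hvpos l⟩ i'
    have hd : dH (A.mulVec u) (A.mulVec v) ≤ projDiam A := dH_le_projDiam hA hupos hvpos
    have := ratio_le_of_dH_le hAu hAv hd i j
    rw [show A.mulVec u i = A i k + ε * Ri from mulVec_basis_eps A k ε i,
        show A.mulVec u j = A j k + ε * Rj from mulVec_basis_eps A k ε j,
        show A.mulVec v i = A i l + ε * Ri from mulVec_basis_eps A l ε i,
        show A.mulVec v j = A j l + ε * Rj from mulVec_basis_eps A l ε j] at this
    simp only [hg]
    linarith
  have hcont : Continuous g := by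
    simp only [hg]; continuity
  have htend : Filter.Tendsto g (nhdsWithin 0 (Set.Ioi 0)) (nhds (g 0)) :=
    (hcont.tendsto 0).mono_left nhdsWithin_le_nhds
  have h0 : g 0 ≤ 0 :=
    le_of_tendsto htend (Filter.eventually_iff_exists_mem.mpr
      ⟨Set.Ioi 0, self_mem_nhdsWithin, hgle⟩)
  simp only [hg, zero_mul, mul_zero, add_zero] at h0
  linarith

/-- Comparison lemma: for nonnegative nonzero `z, w`, the oscillation of `Az/Aw`
is controlled by the projective diameter. -/
lemma sup_le_exp_inf (hA : ∀ i j, 0 < A i j) {z w : Fin D → ℝ}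
    (hz : ∀ i, 0 ≤ z i) (hz' : ∃ k, 0 < z k) (hw : ∀ i, 0 ≤ w i) (hw' : ∃ k, 0 < w k) :
    (⨆ i, A.mulVec z i / A.mulVec w i)
      ≤ Real.exp (projDiam A) * ⨅ i, A.mulVec z i / A.mulVec w i := by
  have hAz := mulVec_pos hA hz hz'
  have hAw := mulVec_pos hA hw hw'
  obtain ⟨i, hieq, -⟩ := fin_sup_spec (fun i => A.mulVec z i / A.mulVec w i)
  obtain ⟨j, hjeq, -⟩ := fin_inf_spec (fun i => A.mulVec z i / A.mulVec w i)
  rw [hieq, hjeq]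
  have key : A.mulVec z i * A.mulVec w j
      ≤ Real.exp (projDiam A) * (A.mulVec w i * A.mulVec z j) := by
    have expand : ∀ (p q : Fin D → ℝ) (a b : Fin D),
        A.mulVec p a * A.mulVec q b = ∑ k, ∑ l, A a k * p k * (A b l * q l) := by
      intro p q a b
      simp only [Matrix.mulVec, dotProduct, Finset.sum_mul_sum]
    have expand2 : A.mulVec w i * A.mulVec z j
        = ∑ k, ∑ l, A i l * w l * (A j k * z k) := by
      rw [expand w z i j, Finset.sum_comm]
    rw [expand z w i j, expand2, Finset.mul_sum]
    apply Finset.sum_le_sum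
    intro k _
    rw [Finset.mul_sum]
    apply Finset.sum_le_sum
    intro l _
    have hce := cross_entry hA i j k l
    have h1 : A i k * z k * (A j l * w l) = (A i k * A j l) * (z k * w l) := by ring
    have h2 : Real.exp (projDiam A) * (A i l * w l * (A j k * z k))
        = (Real.exp (projDiam A) * (A i l * A j k)) * (z k * w l) := by ring
    rw [h1, h2]
    exact mul_le_mul_of_nonneg_right hce (mul_nonneg (hz k) (hw l))
  rw [show Real.exp (projDiam A) * (A.mulVec z j / A.mulVec w j)
      = (Real.exp (projDiam A) * A.mulVec z j) / A.mulVec w j from (mul_div_assoc _ _ _).symm,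
    div_le_div_iff₀ (hAw i) (hAw j)]
  nlinarith [key]
end Cross

section Tanh

lemma tanh_formula (x : ℝ) :
    Real.tanh x = (Real.exp (2 * x) - 1) / (Real.exp (2 * x) + 1) := by
  rw [Real.tanh_eq_sinh_div_cosh, Real.sinh_eq, Real.cosh_eq]
  have h1 : Real.exp x ≠ 0 := (Real.exp_pos x).ne'
  have h2 : Real.exp (2 * x) + 1 ≠ 0 := by positivity
  have h3 : Real.exp x + Real.exp (-x) ≠ 0 := by positivity
  have h4 : Real.exp (2 * x) = Real.exp x * Real.exp x := by
    rw [two_mul, Real.exp_add]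
  have h5 : Real.exp (-x) = (Real.exp x)⁻¹ := Real.exp_neg x
  field_simp [h5]
  rw [mul_comm x 2, h4, h5]
  field_simp

lemma tanh_mono {a b : ℝ} (hab : a ≤ b) : Real.tanh a ≤ Real.tanh b := by
  rw [tanh_formula, tanh_formula]
  have hpa : (0:ℝ) < Real.exp (2 * a) := Real.exp_pos _
  have hpb : (0:ℝ) < Real.exp (2 * b) := Real.exp_pos _
  have hab' : Real.exp (2 * a) ≤ Real.exp (2 * b) := Real.exp_le_exp.mpr (by linarith)
  rw [div_le_div_iff₀ (by positivity) (by positivity)]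
  nlinarith

lemma tanh_nonneg_of_nonneg {a : ℝ} (ha : 0 ≤ a) : 0 ≤ Real.tanh a := by
  have := tanh_mono ha
  simpa [Real.tanh_eq_sinh_div_cosh, Real.sinh_zero] using this

lemma tanh_lt_one' (x : ℝ) : Real.tanh x < 1 := by
  rw [Real.tanh_eq_sinh_div_cosh, div_lt_one (Real.cosh_pos x)]
  exact Real.sinh_lt_cosh x

/-- `tanh (log (M/m) / 4) = (√M - √m) / (√M + √m)` for `0 < m ≤ M`. -/
lemma tanh_quarter_log {m M : ℝ} (hm : 0 < m) (hmM : m ≤ M) :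
    Real.tanh (Real.log (M / m) / 4)
      = (Real.sqrt M - Real.sqrt m) / (Real.sqrt M + Real.sqrt m) := by
  have hM : 0 < M := lt_of_lt_of_le hm hmM
  have hsm : 0 < Real.sqrt m := Real.sqrt_pos.mpr hm
  have hsM : 0 < Real.sqrt M := Real.sqrt_pos.mpr hM
  set E := Real.exp (Real.log (M / m) / 2) with hEdef
  have hE2 : E ^ 2 = M / m := by
    rw [hEdef, sq, ← Real.exp_add]
    rw [show Real.log (M / m) / 2 + Real.log (M / m) / 2 = Real.log (M / m) by ring]
    exact Real.exp_log (by positivity)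
  have hEpos : 0 < E := Real.exp_pos _
  have hEeq : E = Real.sqrt M / Real.sqrt m := by
    have h2 : (Real.sqrt M / Real.sqrt m) ^ 2 = M / m := by
      rw [div_pow, Real.sq_sqrt hM.le, Real.sq_sqrt hm.le]
    have := hE2.trans h2.symm
    nlinarith [hEpos, div_pos hsM hsm]
  rw [tanh_formula, show 2 * (Real.log (M / m) / 4) = Real.log (M / m) / 2 by ring,
    ← hEdef, hEeq]
  have key : (Real.sqrt M / Real.sqrt m - 1) / (Real.sqrt M / Real.sqrt m + 1)
      = (Real.sqrt M - Real.sqrt m) / (Real.sqrt M + Real.sqrt m) := by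
    rw [div_eq_div_iff (by positivity) (by positivity)]
    field_simp
  exact key

end Tanh

section Calc

lemma key_calc {m M c L : ℝ} (hm : 0 < m) (hmM : m ≤ M) (hL : 1 ≤ L)
    (hc : (Real.sqrt M - Real.sqrt m) / (Real.sqrt M + Real.sqrt m) ≤ c) :
    Real.log (1 + M * L) + Real.log (1 + m)
      ≤ c * Real.log L + (Real.log (1 + m * L) + Real.log (1 + M)) := by
  have hM : 0 < M := lt_of_lt_of_le hm hmM
  set h : ℝ → ℝ := fun t =>
    c * t - Real.log (1 + M * Real.exp t) + Real.log (1 + m * Real.exp t) with hh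
  have hder : ∀ t, HasDerivAt h
      (c - M * Real.exp t / (1 + M * Real.exp t)
        + m * Real.exp t / (1 + m * Real.exp t)) t := by
    intro t
    have h1 : HasDerivAt (fun t : ℝ => c * t) c t := by
      simpa using (hasDerivAt_id t).const_mul c
    have he := Real.hasDerivAt_exp t
    have h2 : HasDerivAt (fun t => 1 + M * Real.exp t) (M * Real.exp t) t := by
      simpa using (he.const_mul M).const_add 1
    have h3 := h2.log (by positivity)
    have h4 : HasDerivAt (fun t => 1 + m * Real.exp t) (m * Real.exp t) t := by
      simpa using (he.const_mul m).const_add 1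
    have h5 := h4.log (by positivity)
    exact (h1.sub h3).add h5
  have hmono : Monotone h := by
    apply monotone_of_deriv_nonneg (fun t => (hder t).differentiableAt)
    intro t
    rw [(hder t).deriv]
    set s := Real.exp t with hs
    have hspos : 0 < s := Real.exp_pos t
    set a := Real.sqrt M with ha
    set b := Real.sqrt m with hb
    have ha2 : a ^ 2 = M := Real.sq_sqrt hM.le
    have hb2 : b ^ 2 = m := Real.sq_sqrt hm.le
    have hbpos : 0 < b := Real.sqrt_pos.mpr hm
    have hab : b ≤ a := Real.sqrt_le_sqrt hmM
    have e1 : M * s / (1 + M * s) - m * s / (1 + m * s)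
        = s * (M - m) / ((1 + M * s) * (1 + m * s)) := by
      field_simp
      ring
    have e2 : s * (M - m) / ((1 + M * s) * (1 + m * s)) ≤ (a - b) / (a + b) := by
      rw [div_le_div_iff₀ (by positivity) (by positivity), ← ha2, ← hb2]
      nlinarith [mul_nonneg (sub_nonneg.2 hab) (sq_nonneg (1 - s * a * b))]
    have : M * s / (1 + M * s) - m * s / (1 + m * s) ≤ c := by
      rw [e1]; exact le_trans e2 hc
    linarith
  have hkey := hmono (Real.log_nonneg hL)
  have hLpos : 0 < L := lt_of_lt_of_le one_pos hL
  have hexp : Real.exp (Real.log L) = L := Real.exp_log hLpos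
  simp only [hh, Real.exp_zero, mul_one, mul_zero, hexp] at hkey
  linarith

end Calc

section Main

variable {D : ℕ} [Nonempty (Fin D)]

lemma sup_const_mul (a : ℝ) (ha : 0 ≤ a) (f : Fin D → ℝ) :
    (⨆ i, a * f i) = a * ⨆ i, f i := by
  obtain ⟨i, hieq, hile⟩ := fin_sup_spec f
  rw [hieq]
  exact le_antisymm (sup_le_of_forall fun j => mul_le_mul_of_nonneg_left (hile j) ha)
    (le_sup_of (fun i => a * f i) i)

lemma inf_const_mul (a : ℝ) (ha : 0 ≤ a) (f : Fin D → ℝ) :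
    (⨅ i, a * f i) = a * ⨅ i, f i := by
  obtain ⟨i, hieq, hile⟩ := fin_inf_spec f
  rw [hieq]
  exact le_antisymm (inf_le_of (fun i => a * f i) i)
    (le_inf_of_forall fun j => mul_le_mul_of_nonneg_left (hile j) ha)

lemma dH_smul_smul {c c' : ℝ} (hc : 0 < c) (hc' : 0 < c') (u v : Fin D → ℝ) :
    dH (c • u) (c' • v) = dH u v := by
  unfold dH
  have h : ∀ i, (c • u) i / (c' • v) i = (c / c') * (u i / v i) := by
    intro i
    simp only [Pi.smul_apply, smul_eq_mul]
    rw [mul_div_mul_comm]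
  simp only [h]
  rw [sup_const_mul _ (by positivity), inf_const_mul _ (by positivity),
    mul_div_mul_left _ _ (by positivity : (0:ℝ) < c / c').ne']

lemma enorm_smul_nonneg {c : ℝ} (hc : 0 ≤ c) (v : Fin D → ℝ) :
    euclNormFin (c • v) = c * euclNormFin v := by
  unfold euclNormFin
  simp only [Pi.smul_apply, smul_eq_mul, mul_pow]
  rw [← Finset.mul_sum, Real.sqrt_mul (sq_nonneg c), Real.sqrt_sq hc]

end Main

theorem normalized_positive_map_strict_contraction
    (D : ℕ) (hD : 1 ≤ D) (A : Matrix (Fin D) (Fin D) ℝ)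
    (hA : ∀ i j, 0 < A i j) :
    (∀ x : Fin D → ℝ, (∀ i, 0 < x i) → euclNormFin x = 1 →
      (∀ i, 0 < Fmap A x i) ∧ euclNormFin (Fmap A x) = 1) ∧
    (∀ x y : Fin D → ℝ, (∀ i, 0 < x i) → euclNormFin x = 1 → (∀ i, 0 < y i) → euclNormFin y = 1 →
      dH (Fmap A x) (Fmap A y) ≤ Real.tanh (projDiam A / 4) * dH x y) ∧
    Real.tanh (projDiam A / 4) < 1 := by
  haveI : Nonempty (Fin D) := Fin.pos_iff_nonempty.mp hD
  have hmul : ∀ x : Fin D → ℝ, (∀ i, 0 < x i) → ∀ i, 0 < A.mulVec x i := fun x hx i =>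
    mulVec_pos hA (fun r => (hx r).le) ⟨Classical.arbitrary _, hx _⟩ i
  have henorm_pos : ∀ v : Fin D → ℝ, (∀ i, 0 < v i) → 0 < euclNormFin v := by
    intro v hv
    unfold euclNormFin
    exact Real.sqrt_pos.mpr
      (Finset.sum_pos (fun i _ => pow_pos (hv i) 2) Finset.univ_nonempty)
  refine ⟨?_, ?_, tanh_lt_one' _⟩
  · intro x hx _
    have hAx := hmul x hx
    have hne := henorm_pos _ hAx
    constructor
    · intro i
      unfold Fmap
      simp only [Pi.smul_apply, smul_eq_mul]
      exact mul_pos (inv_pos.mpr hne) (hAx i)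
    · unfold Fmap
      rw [enorm_smul_nonneg (inv_nonneg.mpr hne.le), inv_mul_cancel₀ hne.ne']
  · intro x y hx hnx hy hny
    have hAx := hmul x hx
    have hAy := hmul y hy
    have hFd : dH (Fmap A x) (Fmap A y) = dH (A.mulVec x) (A.mulVec y) := by
      unfold Fmap
      exact dH_smul_smul (inv_pos.mpr (henorm_pos _ hAx)) (inv_pos.mpr (henorm_pos _ hAy)) _ _
    rw [hFd]
    have hdxy : dH x y = Real.log ((⨆ i, x i / y i) / ⨅ i, x i / y i) := rfl
    set α := ⨅ i, x i / y i with hα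
    set β := ⨆ i, x i / y i with hβ
    obtain ⟨i0, hi0eq, hi0le⟩ := fin_inf_spec (fun i => x i / y i)
    obtain ⟨i1, hi1eq, hi1le⟩ := fin_sup_spec (fun i => x i / y i)
    have hαpos : 0 < α := inf_ratio_pos hx hy
    have hαβ : α ≤ β := inf_le_sup_ratio _
    have htanh0 : 0 ≤ Real.tanh (projDiam A / 4) :=
      tanh_nonneg_of_nonneg (by linarith [projDiam_nonneg (A := A) hA])
    by_cases hcase : β ≤ α
    · -- degenerate case : x is proportional to y
      have hβα : β = α := le_antisymm hcase hαβ
      have hxy : ∀ i, x i = α * y i := by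
        intro i
        have h1 : α ≤ x i / y i := inf_le_of (fun i => x i / y i) i
        have h2 : x i / y i ≤ β := le_sup_of (fun i => x i / y i) i
        have h3 : x i / y i = α := le_antisymm (hβα ▸ h2) h1
        rw [← h3, div_mul_cancel₀]
        exact (hy i).ne'
      have hxx : x = α • y := funext fun i => by
        simp only [Pi.smul_apply, smul_eq_mul]; exact hxy i
      have hzero : dH (A.mulVec x) (A.mulVec y) = 0 := by
        rw [hxx, Matrix.mulVec_smul]
        have h1 := dH_smul_smul hαpos one_pos (A.mulVec y) (A.mulVec y)
        rw [one_smul] at h1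
        rw [h1, dH_self_eq_zero hAy]
      rw [hzero, hdxy, hβα, div_self hαpos.ne', Real.log_one, mul_zero]
    · push_neg at hcase
      have hβpos : 0 < β := hαpos.trans hcase
      set z : Fin D → ℝ := fun i => x i - α * y i with hz
      set w : Fin D → ℝ := fun i => β * y i - x i with hw
      have hznn : ∀ i, 0 ≤ z i := by
        intro i
        have h1 : α ≤ x i / y i := inf_le_of (fun i => x i / y i) i
        have h2 := (le_div_iff₀ (hy i)).mp h1
        simp only [hz]; linarith
      have hwnn : ∀ i, 0 ≤ w i := by
        intro i
        have h1 : x i / y i ≤ β := le_sup_of (fun i => x i / y i) i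
        have h2 := (div_le_iff₀ (hy i)).mp h1
        simp only [hw]; linarith
      have hxi1 : x i1 = β * y i1 := by
        have : x i1 / y i1 = β := hi1eq.symm
        rw [← this, div_mul_cancel₀]; exact (hy i1).ne'
      have hxi0 : x i0 = α * y i0 := by
        have : x i0 / y i0 = α := hi0eq.symm
        rw [← this, div_mul_cancel₀]; exact (hy i0).ne'
      have hz1 : 0 < z i1 := by
        simp only [hz]; rw [hxi1]; nlinarith [hy i1]
      have hw0 : 0 < w i0 := by
        simp only [hw]; rw [hxi0]; nlinarith [hy i0]
      have hAz := mulVec_pos hA hznn ⟨i1, hz1⟩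
      have hAw := mulVec_pos hA hwnn ⟨i0, hw0⟩
      set m := ⨅ i, A.mulVec z i / A.mulVec w i with hm
      set M := ⨆ i, A.mulVec z i / A.mulVec w i with hM
      have hmpos : 0 < m := inf_ratio_pos hAz hAw
      have hmM : m ≤ M := inf_le_sup_ratio _
      have hMpos : 0 < M := hmpos.trans_le hmM
      have hMexp : M ≤ Real.exp (projDiam A) * m :=
        sup_le_exp_inf hA hznn ⟨i1, hz1⟩ hwnn ⟨i0, hw0⟩
      have hlogMm : Real.log (M / m) ≤ projDiam A := by
        rw [← Real.log_exp (projDiam A)]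
        apply Real.log_le_log (by positivity)
        rw [div_le_iff₀ hmpos]
        linarith
      have hAzi : ∀ i, A.mulVec z i = A.mulVec x i - α * A.mulVec y i := by
        intro i
        have hzdef : z = x - α • y := funext fun i => by
          simp [hz, Pi.sub_apply, Pi.smul_apply, smul_eq_mul]
        rw [hzdef, Matrix.mulVec_sub, Matrix.mulVec_smul]
        simp [Pi.sub_apply, Pi.smul_apply, smul_eq_mul]
      have hAwi : ∀ i, A.mulVec w i = β * A.mulVec y i - A.mulVec x i := by
        intro i
        have hwdef : w = β • y - x := funext fun i => by
          simp [hw, Pi.sub_apply, Pi.smul_apply, smul_eq_mul]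
        rw [hwdef, Matrix.mulVec_sub, Matrix.mulVec_smul]
        simp [Pi.sub_apply, Pi.smul_apply, smul_eq_mul]
      set lo := (α + β * m) / (1 + m) with hlo
      set hi := (α + β * M) / (1 + M) with hhi
      have hbounds : ∀ i, lo ≤ A.mulVec x i / A.mulVec y i ∧
          A.mulVec x i / A.mulVec y i ≤ hi := by
        intro i
        have hp := hAz i
        have hq := hAw i
        have hmq : m * A.mulVec w i ≤ A.mulVec z i :=
          (le_div_iff₀ hq).mp (inf_le_of (fun i => A.mulVec z i / A.mulVec w i) i)
        have hMq : A.mulVec z i ≤ M * A.mulVec w i :=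
          (div_le_iff₀ hq).mp (le_sup_of (fun i => A.mulVec z i / A.mulVec w i) i)
        have hAxi : A.mulVec x i = α * A.mulVec y i + A.mulVec z i := by
          rw [hAzi i]; ring
        have hsum : A.mulVec z i + A.mulVec w i = (β - α) * A.mulVec y i := by
          rw [hAzi i, hAwi i]; ring
        constructor
        · rw [hlo, div_le_div_iff₀ (by positivity) (hAy i)]
          have expand : A.mulVec x i * (1 + m) - (α + β * m) * A.mulVec y i
              = A.mulVec z i - m * A.mulVec w i := by
            linear_combination (1 + m) * hAxi + m * hsum
          linarith
        · rw [hhi, div_le_div_iff₀ (hAy i) (by positivity)]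
          have expand : (α + β * M) * A.mulVec y i - A.mulVec x i * (1 + M)
              = M * A.mulVec w i - A.mulVec z i := by
            linear_combination -(1 + M) * hAxi - M * hsum
          linarith
      have hlopos : 0 < lo := by rw [hlo]; positivity
      have hdle := dH_le_of_bounds hlopos (fun i => (hbounds i).1) (fun i => (hbounds i).2)
      set c := Real.tanh (projDiam A / 4) with hc
      have hθc : (Real.sqrt M - Real.sqrt m) / (Real.sqrt M + Real.sqrt m) ≤ c := by
        rw [← tanh_quarter_log hmpos hmM, hc]
        exact tanh_mono (by linarith)
      set L := β / α with hL
      have hL1 : 1 ≤ L := (one_le_div hαpos).mpr hαβ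
      have hLpos : 0 < L := lt_of_lt_of_le one_pos hL1
      have hkc := key_calc hmpos hmM hL1 hθc
      have hβL : β = α * L := by rw [hL]; field_simp
      have hr : hi / lo = ((1 + M * L) * (1 + m)) / ((1 + m * L) * (1 + M)) := by
        rw [hhi, hlo, hβL]
        rw [div_div_div_comm]
        have h1 : (0:ℝ) < 1 + m := by positivity
        have h2 : (0:ℝ) < 1 + M := by positivity
        have h3 : α + α * L * m ≠ 0 := by positivity
        field_simp
      have hlog_r : Real.log (hi / lo)
          = Real.log (1 + M * L) + Real.log (1 + m)
            - (Real.log (1 + m * L) + Real.log (1 + M)) := by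
        rw [hr, Real.log_div (by positivity) (by positivity),
          Real.log_mul (by positivity) (by positivity),
          Real.log_mul (by positivity) (by positivity)]
      have hlogL : dH x y = Real.log L := by rw [hdxy]
      rw [hlogL]
      calc dH (A.mulVec x) (A.mulVec y) ≤ Real.log (hi / lo) := hdle
      _ ≤ c * Real.log L := by rw [hlog_r]; linarith
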